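/- Let G be a finite simple connected graph with exactly n ≥ 4 edges whose boundary B(G) (the set of vertices of degree one) is nonempty, and suppose the Dirichlet Cheeger constant satisfies h_D(G) = 1/(n-1). Then G has exactly one vertex of degree one (i.e., |B(G)| = 1), and moreover any nonempty U ⊆ Ω(G) achieving the minimum in the definition of h_D(G) satisfies U = Ω(G), |U| = n-1, and |E(U,U^c)| = 1. -/

import Mathlib

open scoped Classical

noncomputable section

/-- The term `|f x - f y| ^ p` as a function on unordered pairs. -/
noncomputable def edgeTerm {V : Type*} (p : ℝ) (f : V → ℝ) : Sym2 V → ℝ :=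
  Sym2.lift ⟨fun x y => |f x - f y| ^ p, fun x y => by dsimp only; rw [abs_sub_comm]⟩

/-- The `p`-Rayleigh quotient of a function on a finite graph. -/
noncomputable def rayleigh {V : Type*} [Fintype V] [DecidableEq V] (G : SimpleGraph V)
    (p : ℝ) (f : V → ℝ) : ℝ :=
  (∑ e ∈ G.edgeFinset, edgeTerm p f e) / ∑ v, |f v| ^ p

/-- The first `p`-Dirichlet eigenvalue: infimum of the Rayleigh quotient over nonzero
functions vanishing on the boundary (vertices of degree one). -/
noncomputable def lambda1 {V : Type*} [Fintype V] [DecidableEq V] (G : SimpleGraph V)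
    (p : ℝ) : ℝ :=
  sInf {r | ∃ f : V → ℝ, f ≠ 0 ∧ (∀ v, G.degree v = 1 → f v = 0) ∧ r = rayleigh G p f}

/-- The tadpole graph `T_{n,i}` on vertices `0,…,n-1` (vertex `t_k` is `k-1`):
edges `t_k t_{k+1}` for `1 ≤ k ≤ n-1` together with the edge `t_1 t_i`. -/
def tadpole (n i : ℕ) : SimpleGraph (Fin n) :=
  SimpleGraph.fromRel (fun a b => a.val + 1 = b.val ∨ (a.val = 0 ∧ b.val = i - 1))

/-- The path graph on `n` vertices `0,…,n-1`. -/
def pathG (n : ℕ) : SimpleGraph (Fin n) :=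
  SimpleGraph.fromRel (fun a b : Fin n => a.val + 1 = b.val)

/-- The set of edges of `G` with exactly one endpoint in `U`. -/
noncomputable def crossEdges {V : Type*} [Fintype V] [DecidableEq V] (G : SimpleGraph V)
    (U : Finset V) : Finset (Sym2 V) :=
  G.edgeFinset.filter fun e =>
    Sym2.lift ⟨fun x y => (x ∈ U ∧ y ∉ U) ∨ (x ∉ U ∧ y ∈ U),
      fun x y => by simp only [eq_iff_iff]; tauto⟩ e

/-- The Dirichlet Cheeger constant: infimum of `|E(U,Uᶜ)|/|U|` over nonempty sets `U`
of interior vertices (vertices of degree at least two). -/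
noncomputable def dCheeger {V : Type*} [Fintype V] [DecidableEq V] (G : SimpleGraph V) : ℝ :=
  sInf {r | ∃ U : Finset V, U.Nonempty ∧ (∀ v ∈ U, 2 ≤ G.degree v) ∧
    r = ((crossEdges G U).card : ℝ) / U.card}

section helpers
variable {V : Type*} [Fintype V] [DecidableEq V] {G : SimpleGraph V}

lemma mem_crossEdges_mk {U : Finset V} {x y : V} (h : G.Adj x y) (hx : x ∈ U) (hy : y ∉ U) :
    s(x, y) ∈ crossEdges G U := by
  simp only [crossEdges, Finset.mem_filter, SimpleGraph.mem_edgeFinset, Sym2.lift_mk]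
  exact ⟨h, Or.inl ⟨hx, hy⟩⟩

lemma walk_cross {U : Finset V} {a b : V} (w : G.Walk a b) : a ∈ U → b ∉ U →
    ∃ x y, G.Adj x y ∧ x ∈ U ∧ y ∉ U := by
  induction w with
  | nil => intro ha hb; exact absurd ha hb
  | @cons x c bb h p ih =>
    intro ha hb
    by_cases hc : c ∈ U
    · exact ih hc hb
    · exact ⟨_, _, h, ha, hc⟩

lemma interior_card_le {n : ℕ} (hcard : G.edgeFinset.card = n) {p : V} (hp : G.degree p = 1)
    {U : Finset V} (hdeg : ∀ v ∈ U, 2 ≤ G.degree v) : U.card ≤ n - 1 := by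
  have hpU : p ∉ U := fun h => by have := hdeg p h; omega
  have hsum : ∑ v, G.degree v = 2 * n := by
    rw [SimpleGraph.sum_degrees_eq_twice_card_edges, hcard]
  have h1 : ∑ v ∈ insert p U, G.degree v ≤ ∑ v, G.degree v :=
    Finset.sum_le_sum_of_subset (Finset.subset_univ _)
  rw [Finset.sum_insert hpU, hp] at h1
  have h2 : U.card * 2 ≤ ∑ v ∈ U, G.degree v := by
    simpa using Finset.card_nsmul_le_sum U _ 2 hdeg
  omega

lemma pendant_nbr {n : ℕ} (hn : 4 ≤ n) (hcard : G.edgeFinset.card = n)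
    (hconn : G.Connected) {b : V} (hb : G.degree b = 1) :
    ∃ a, G.Adj b a ∧ 2 ≤ G.degree a := by
  have hb' : (G.neighborFinset b).card = 1 := by
    rwa [G.card_neighborFinset_eq_degree]
  obtain ⟨a, ha⟩ := Finset.card_eq_one.mp hb'
  have hadj : G.Adj b a := by
    rw [← SimpleGraph.mem_neighborFinset, ha]; exact Finset.mem_singleton_self a
  refine ⟨a, hadj, ?_⟩
  by_contra hda
  have hda1 : G.degree a = 1 := by
    have h0 : 0 < G.degree a := by
      rw [← G.card_neighborFinset_eq_degree]
      exact Finset.card_pos.mpr ⟨b, (SimpleGraph.mem_neighborFinset G a b).mpr hadj.symm⟩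
    omega
  have ha' : (G.neighborFinset a).card = 1 := by rwa [G.card_neighborFinset_eq_degree]
  obtain ⟨c, hc⟩ := Finset.card_eq_one.mp ha'
  have hcb : c = b := by
    have : b ∈ G.neighborFinset a := (SimpleGraph.mem_neighborFinset G a b).mpr hadj.symm
    rw [hc, Finset.mem_singleton] at this; exact this.symm
  rw [hcb] at hc
  -- every vertex is a or b
  have key : ∀ {x v : V}, G.Walk x v → (x = a ∨ x = b) → (v = a ∨ v = b) := by
    intro x v w
    induction w with
    | nil => exact id
    | @cons y z vv h p ih =>
      intro hx
      apply ih
      rcases hx with rfl | rfl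
      · right
        have hz : z ∈ G.neighborFinset y := (SimpleGraph.mem_neighborFinset G y z).mpr h
        rw [hc, Finset.mem_singleton] at hz; exact hz
      · left
        have hz : z ∈ G.neighborFinset y := (SimpleGraph.mem_neighborFinset G y z).mpr h
        rw [ha, Finset.mem_singleton] at hz; exact hz
  have hsub : (Finset.univ : Finset V) ⊆ {a, b} := by
    intro v _
    obtain ⟨w⟩ := hconn.preconnected a v
    rcases key w (Or.inl rfl) with rfl | rfl <;> simp
  have hne : a ≠ b := hadj.ne'
  have hsum : ∑ v, G.degree v = 2 * n := by
    rw [SimpleGraph.sum_degrees_eq_twice_card_edges, hcard]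
  have h1 : ∑ v, G.degree v ≤ ∑ v ∈ ({a, b} : Finset V), G.degree v :=
    Finset.sum_le_sum_of_subset hsub
  rw [Finset.sum_pair hne, hda1, hb] at h1
  omega


lemma minimizer_structure {n : ℕ} (hn : 4 ≤ n) (hcard : G.edgeFinset.card = n)
    (hconn : G.Connected) {p : V} (hp : G.degree p = 1)
    {U : Finset V} (hne : U.Nonempty) (hdeg : ∀ v ∈ U, 2 ≤ G.degree v)
    (hr : ((crossEdges G U).card : ℝ) / U.card = 1 / ((n : ℝ) - 1)) :
    (crossEdges G U).card = 1 ∧ U.card = n - 1 := by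
  have hpU : p ∉ U := fun h => by have := hdeg p h; omega
  obtain ⟨u, hu⟩ := hne
  obtain ⟨w⟩ := hconn.preconnected u p
  obtain ⟨x, y, hxy, hx, hy⟩ := walk_cross w hu hpU
  have hcr1 : 1 ≤ (crossEdges G U).card :=
    Finset.card_pos.mpr ⟨s(x, y), mem_crossEdges_mk hxy hx hy⟩
  have hUle : U.card ≤ n - 1 := interior_card_le hcard hp hdeg
  have hUpos : 0 < U.card := Finset.card_pos.mpr ⟨u, hu⟩
  have hd1 : (U.card : ℝ) ≠ 0 := Nat.cast_ne_zero.mpr hUpos.ne'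
  have hd2 : (n : ℝ) - 1 ≠ 0 := by
    have : (4 : ℝ) ≤ n := by exact_mod_cast hn
    linarith
  rw [div_eq_div_iff hd1 hd2, one_mul] at hr
  have hcast : ((n : ℝ) - 1) = ((n - 1 : ℕ) : ℝ) := by
    have : (1 : ℕ) ≤ n := by omega
    push_cast [this]; ring
  rw [hcast] at hr
  have hnat : (crossEdges G U).card * (n - 1) = U.card := by exact_mod_cast hr
  rcases Nat.lt_or_ge (crossEdges G U).card 2 with h2 | h2
  · have hc1 : (crossEdges G U).card = 1 := by omega
    rw [hc1, one_mul] at hnat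
    exact ⟨hc1, hnat.symm⟩
  · have : 2 * (n - 1) ≤ (crossEdges G U).card * (n - 1) :=
      Nat.mul_le_mul_right _ h2
    omega

lemma cheeger_equality_structure' {n : ℕ} (hn : 4 ≤ n) (hcard : G.edgeFinset.card = n)
    (hconn : G.Connected) (hbd : ∃ v, G.degree v = 1)
    (hch : dCheeger G = 1 / ((n : ℝ) - 1)) :
    (Finset.univ.filter fun v : V => G.degree v = 1).card = 1 ∧
      ∀ U : Finset V, U.Nonempty → (∀ v ∈ U, 2 ≤ G.degree v) →
        ((crossEdges G U).card : ℝ) / U.card = dCheeger G →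
        U = (Finset.univ.filter fun v : V => 2 ≤ G.degree v) ∧
          U.card = n - 1 ∧ (crossEdges G U).card = 1 := by
  obtain ⟨p, hp⟩ := hbd
  set Om : Finset V := Finset.univ.filter fun v : V => 2 ≤ G.degree v with hOm
  have hOmdeg : ∀ v ∈ Om, 2 ≤ G.degree v := fun v hv => (Finset.mem_filter.mp hv).2
  have hOmle : Om.card ≤ n - 1 := interior_card_le hcard hp hOmdeg
  have key : ∀ U : Finset V, U.Nonempty → (∀ v ∈ U, 2 ≤ G.degree v) →
      ((crossEdges G U).card : ℝ) / U.card = 1 / ((n : ℝ) - 1) →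
      U = Om ∧ U.card = n - 1 ∧ (crossEdges G U).card = 1 := by
    intro U hne hdeg hr
    obtain ⟨hc1, hUc⟩ := minimizer_structure hn hcard hconn hp hne hdeg hr
    have hsub : U ⊆ Om := fun v hv => Finset.mem_filter.mpr ⟨Finset.mem_univ _, hdeg v hv⟩
    exact ⟨Finset.eq_of_subset_of_card_le hsub (by omega), hUc, hc1⟩
  obtain ⟨a, hba, ha2⟩ := pendant_nbr hn hcard hconn hp
  have hS : dCheeger G ∈ {r | ∃ U : Finset V, U.Nonempty ∧ (∀ v ∈ U, 2 ≤ G.degree v) ∧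
      r = ((crossEdges G U).card : ℝ) / U.card} := by
    apply Set.Nonempty.csInf_mem
    · refine ⟨_, {a}, Finset.singleton_nonempty a, fun v hv => ?_, rfl⟩
      rw [Finset.mem_singleton] at hv; subst hv; exact ha2
    · apply Set.Finite.subset (Set.finite_range
        (fun U : Finset V => ((crossEdges G U).card : ℝ) / U.card))
      rintro r ⟨U, -, -, rfl⟩; exact ⟨U, rfl⟩
  obtain ⟨U₀, hne₀, hdeg₀, hr₀⟩ := hS
  rw [hch] at hr₀
  obtain ⟨hU₀eq, hU₀c, hc₀⟩ := key U₀ hne₀ hdeg₀ hr₀.symm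
  rw [hU₀eq] at hc₀
  constructor
  · have hsel : ∀ b : V, ∃ c : V, G.degree b = 1 → G.Adj b c ∧ 2 ≤ G.degree c := by
      intro b
      by_cases h : G.degree b = 1
      · obtain ⟨c, h1, h2⟩ := pendant_nbr hn hcard hconn h
        exact ⟨c, fun _ => ⟨h1, h2⟩⟩
      · exact ⟨b, fun h' => absurd h' h⟩
    choose f hf using hsel
    have hle : (Finset.univ.filter fun v : V => G.degree v = 1).card ≤
        (crossEdges G Om).card := by
      apply Finset.card_le_card_of_injOn (fun b => s(b, f b))
      · intro b hb
        rw [Finset.mem_coe, Finset.mem_filter] at hb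
        obtain ⟨h1, h2⟩ := hf b hb.2
        have hbOm : b ∉ Om := fun hmem => by
          have := (Finset.mem_filter.mp hmem).2; omega
        have hfOm : f b ∈ Om := Finset.mem_filter.mpr ⟨Finset.mem_univ _, h2⟩
        have := mem_crossEdges_mk h1.symm hfOm hbOm
        rwa [Sym2.eq_swap] at this
      · intro b hb b' hb' heq
        rw [Finset.mem_coe, Finset.mem_filter] at hb hb'
        rw [Sym2.eq_iff] at heq
        rcases heq with ⟨h1, -⟩ | ⟨h1, -⟩
        · exact h1
        · exfalso
          have := (hf b' hb'.2).2
          rw [← h1] at this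
          omega
    have hge : 0 < (Finset.univ.filter fun v : V => G.degree v = 1).card :=
      Finset.card_pos.mpr ⟨p, Finset.mem_filter.mpr ⟨Finset.mem_univ _, hp⟩⟩
    omega
  · intro U h1 h2 h3
    rw [hch] at h3
    exact key U h1 h2 h3

end helpers

/-- If the Dirichlet Cheeger constant of a connected graph with `n ≥ 4` edges equals
`1/(n-1)`, then the graph has exactly one pendant vertex and any minimizing set `U`
is the whole interior, has `n-1` vertices, and has exactly one crossing edge. -/
theorem cheeger_equality_structure {V : Type*} [Fintype V] [DecidableEq V]
    (G : SimpleGraph V) (n : ℕ) (hn : 4 ≤ n) (hcard : G.edgeFinset.card = n)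
    (hconn : G.Connected) (hbd : ∃ v, G.degree v = 1)
    (hch : dCheeger G = 1 / ((n : ℝ) - 1)) :
    (Finset.univ.filter fun v : V => G.degree v = 1).card = 1 ∧
      ∀ U : Finset V, U.Nonempty → (∀ v ∈ U, 2 ≤ G.degree v) →
        ((crossEdges G U).card : ℝ) / U.card = dCheeger G →
        U = (Finset.univ.filter fun v : V => 2 ≤ G.degree v) ∧
          U.card = n - 1 ∧ (crossEdges G U).card = 1 := by
  exact cheeger_equality_structure' hn hcard hconn hbd hch
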